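/- Less-noisy condition implies its conditioned version (Section IV, proof that (15) implies (14a)): Fix a DM-CIC with transition probability p(y₁,y₂|x₁,x₂). Suppose that for every finite set 𝒰 and every joint pmf p(u,x₁,x₂) with U — (X₁,X₂) — (Y₁,Y₂) Markov through the channel, I(U;Y₁) ≤ I(U;Y₂). Then for every finite set 𝒰 and every joint pmf p(u,x₁,x₂) with the same Markov structure, I(U;Y₁|X₁) ≤ I(U;Y₂|X₁). -/

import Mathlib

open scoped Classical BigOperators
open Filter Topology

noncomputable section

namespace CIC

/-- `q` is a probability mass function on the finite type `Ω`. -/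
def IsPMF {Ω : Type*} [Fintype Ω] (q : Ω → ℝ) : Prop :=
  (∀ ω, 0 ≤ q ω) ∧ ∑ ω, q ω = 1

/-- Probability that the random variable `f` takes the value `a`, under the joint pmf `q`. -/
def pr {Ω α : Type*} [Fintype Ω] (q : Ω → ℝ) (f : Ω → α) (a : α) : ℝ :=
  ∑ ω, if f ω = a then q ω else 0

/-- Mutual information `I(f ; g)` of the random variables `f`, `g` under the joint pmf `q`. -/
def mi {Ω α β : Type*} [Fintype Ω] (q : Ω → ℝ) (f : Ω → α) (g : Ω → β) : ℝ :=
  ∑ ω, q ω * Real.log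
    (pr q (fun ω' => (f ω', g ω')) (f ω, g ω) / (pr q f (f ω) * pr q g (g ω)))

/-- Conditional mutual information `I(f ; g ∣ h)` under the joint pmf `q`. -/
def cmi {Ω α β γ : Type*} [Fintype Ω] (q : Ω → ℝ) (f : Ω → α) (g : Ω → β) (h : Ω → γ) : ℝ :=
  ∑ ω, q ω * Real.log
    ((pr q (fun ω' => (f ω', g ω', h ω')) (f ω, g ω, h ω) * pr q h (h ω)) /
      (pr q (fun ω' => (f ω', h ω')) (f ω, h ω) * pr q (fun ω' => (g ω', h ω')) (g ω, h ω)))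

variable {X1 X2 Y1 Y2 : Type*} [Fintype X1] [Fintype X2] [Fintype Y1] [Fintype Y2]

/-- `W` is a DM-CIC channel transition probability `p(y₁,y₂ ∣ x₁,x₂)`. -/
def IsChannel (W : X1 → X2 → Y1 × Y2 → ℝ) : Prop :=
  (∀ x1 x2 y, 0 ≤ W x1 x2 y) ∧ ∀ x1 x2, ∑ y, W x1 x2 y = 1

/-- Single-letter joint distribution of `(X₁,X₂,Y₁,Y₂)` induced by the input pmf `p`,
with `(Y₁,Y₂)` generated from `(X₁,X₂)` through the channel `W`. -/
def slJoint (W : X1 → X2 → Y1 × Y2 → ℝ) (p : X1 × X2 → ℝ) : X1 × X2 × Y1 × Y2 → ℝ :=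
  fun ω => p (ω.1, ω.2.1) * W ω.1 ω.2.1 (ω.2.2.1, ω.2.2.2)

/-- The DM-CIC `W` is cognitive-more-capable:
`I(X₁,X₂;Y₂) ≥ I(X₁,X₂;Y₁)` for every input distribution `p(x₁,x₂)`. -/
def CognitiveMoreCapable (W : X1 → X2 → Y1 × Y2 → ℝ) : Prop :=
  ∀ p : X1 × X2 → ℝ, IsPMF p →
    mi (slJoint W p) (fun ω => (ω.1, ω.2.1)) (fun ω => ω.2.2.1) ≤
      mi (slJoint W p) (fun ω => (ω.1, ω.2.1)) (fun ω => ω.2.2.2)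

/-- Joint distribution of `(U,X₁,X₂,Y₁,Y₂)` induced by a pmf `q` on `U × X₁ × X₂`, where
`(Y₁,Y₂)` are generated from `(X₁,X₂)` through the channel `W`
(so `U — (X₁,X₂) — (Y₁,Y₂)` is a Markov chain). -/
def auxJoint (W : X1 → X2 → Y1 × Y2 → ℝ) {U : Type*} (q : U × X1 × X2 → ℝ) :
    U × X1 × X2 × Y1 × Y2 → ℝ :=
  fun ω => q (ω.1, ω.2.1, ω.2.2.1) * W ω.2.1 ω.2.2.1 (ω.2.2.2.1, ω.2.2.2.2)

/-- An `(n, M1, M2)` code for the DM-CIC: the cognitive encoder `f2` knows both messages. -/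
structure Code (X1 X2 Y1 Y2 : Type*) (n M1 M2 : ℕ) where
  f1 : Fin M1 → Fin n → X1
  f2 : Fin M1 → Fin M2 → Fin n → X2
  g1 : (Fin n → Y1) → Fin M1
  g2 : (Fin n → Y2) → Fin M2

/-- Average error probability of a code, for independent uniform messages and `n`
memoryless uses of the channel `W`. -/
def avgErr (W : X1 → X2 → Y1 × Y2 → ℝ) {n M1 M2 : ℕ} (c : Code X1 X2 Y1 Y2 n M1 M2) : ℝ :=
  (1 / ((M1 : ℝ) * (M2 : ℝ))) *
    ∑ m1 : Fin M1, ∑ m2 : Fin M2, ∑ y1 : Fin n → Y1, ∑ y2 : Fin n → Y2,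
      (∏ i, W (c.f1 m1 i) (c.f2 m1 m2 i) (y1 i, y2 i)) *
        (if c.g1 y1 ≠ m1 ∨ c.g2 y2 ≠ m2 then 1 else 0)

/-- A rate pair `(R₁, R₂)` is achievable for the DM-CIC `W`: there is a sequence of
`(n, ⌈2^{nR₁}⌉, ⌈2^{nR₂}⌉)` codes whose average error probability tends to `0`. -/
def Achievable (W : X1 → X2 → Y1 × Y2 → ℝ) (R1 R2 : ℝ) : Prop :=
  ∃ c : (n : ℕ) → Code X1 X2 Y1 Y2 n ⌈(2 : ℝ) ^ ((n : ℝ) * R1)⌉₊ ⌈(2 : ℝ) ^ ((n : ℝ) * R2)⌉₊,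
    Tendsto (fun n => avgErr W (c n)) atTop (𝓝 0)

end CIC

namespace CIC

private lemma div_helper (x y z c : ℝ) (hc : c ≠ 0) :
    x / c / (y / c * (z / c)) = x * c / (y * z) := by
  rw [div_mul_div_comm, div_div_eq_mul_div]
  congr 1
  field_simp

private lemma pr_assoc {Ω α β γ : Type*} [Fintype Ω] (P : Ω → ℝ)
    (f : Ω → α) (g : Ω → β) (h : Ω → γ) (v : α) (w : β) (u : γ) :
    pr P (fun ω => ((f ω, g ω), h ω)) ((v, w), u)
      = pr P (fun ω => (f ω, g ω, h ω)) (v, w, u) := by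
  unfold pr
  refine Finset.sum_congr rfl fun ω _ => ?_
  simp [Prod.ext_iff, and_assoc]

private lemma pr_cond {X1 X2 Y1 Y2 : Type*} [Fintype X1] [Fintype X2] [Fintype Y1] [Fintype Y2]
    {k : ℕ} (W : X1 → X2 → Y1 × Y2 → ℝ) (q : Fin k × X1 × X2 → ℝ) (a : X1) (c : ℝ)
    {α : Type*} (f : Fin k × X1 × X2 × Y1 × Y2 → α) (v : α) :
    pr (auxJoint W (fun ω => if ω.2.1 = a then q ω / c else 0)) f v
      = pr (auxJoint W q) (fun ω => (f ω, ω.2.1)) (v, a) / c := by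
  unfold pr auxJoint
  rw [Finset.sum_div]
  refine Finset.sum_congr rfl fun ω _ => ?_
  by_cases h1 : f ω = v <;> by_cases h2 : ω.2.1 = a <;>
    simp [h1, h2, Prod.ext_iff, div_mul_eq_mul_div]

private lemma pr_x1 {X1 X2 Y1 Y2 : Type*} [Fintype X1] [Fintype X2] [Fintype Y1] [Fintype Y2]
    {k : ℕ} (W : X1 → X2 → Y1 × Y2 → ℝ) (hW : IsChannel W)
    (q : Fin k × X1 × X2 → ℝ) (a : X1) :
    pr (auxJoint W q) (fun ω => ω.2.1) a = ∑ u : Fin k, ∑ x2 : X2, q (u, a, x2) := by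
  have hWsum : ∀ x1 x2, ∑ y1 : Y1, ∑ y2 : Y2, W x1 x2 (y1, y2) = 1 := fun x1 x2 => by
    rw [← Fintype.sum_prod_type]; exact hW.2 x1 x2
  unfold pr auxJoint
  simp only [Fintype.sum_prod_type]
  refine Finset.sum_congr rfl fun u _ => ?_
  rw [Finset.sum_eq_single a]
  · refine Finset.sum_congr rfl fun x2 _ => ?_
    simp only [eq_self_iff_true, if_true, ← Finset.mul_sum]
    rw [hWsum, mul_one]
  · intro x1 _ hx1
    simp [hx1]
  · simp

/-- Decomposition of conditional mutual information as a weighted sum of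
fiberwise mutual informations. -/
private lemma cond_decomp
    {X1 X2 Y1 Y2 : Type*} [Fintype X1] [Fintype X2] [Fintype Y1] [Fintype Y2]
    {k : ℕ} (W : X1 → X2 → Y1 × Y2 → ℝ) (hW : IsChannel W)
    (q : Fin k × X1 × X2 → ℝ) (hq : IsPMF q)
    {β : Type*} (g : Fin k × X1 × X2 × Y1 × Y2 → β) :
    cmi (auxJoint W q) (fun ω => ω.1) g (fun ω => ω.2.1)
      = ∑ a : X1,
          (if (∑ u : Fin k, ∑ x2 : X2, q (u, a, x2)) = 0 then 0
           else (∑ u : Fin k, ∑ x2 : X2, q (u, a, x2)) *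
             mi (auxJoint W
                 (fun ω => if ω.2.1 = a then q ω / (∑ u : Fin k, ∑ x2 : X2, q (u, a, x2)) else 0))
               (fun ω => ω.1) g) := by
  classical
  unfold cmi
  have fiber : ∀ F : Fin k × X1 × X2 × Y1 × Y2 → ℝ,
      ∑ ω, F ω = ∑ a : X1, ∑ ω, if ω.2.1 = a then F ω else 0 := by
    intro F
    rw [Finset.sum_comm]
    refine Finset.sum_congr rfl fun ω _ => ?_
    simp [Finset.sum_ite_eq]
  rw [fiber]
  refine Finset.sum_congr rfl fun a _ => ?_
  by_cases hpa : (∑ u : Fin k, ∑ x2 : X2, q (u, a, x2)) = 0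
  · rw [if_pos hpa]
    have hzero : ∀ u x2, q (u, a, x2) = 0 := by
      intro u x2
      have hnn : ∀ i ∈ (Finset.univ : Finset (Fin k)), (0:ℝ) ≤ ∑ x2 : X2, q (i, a, x2) :=
        fun i _ => Finset.sum_nonneg fun x2 _ => hq.1 (i, a, x2)
      have h1 : (∑ x2 : X2, q (u, a, x2)) = 0 :=
        (Finset.sum_eq_zero_iff_of_nonneg hnn).mp hpa u (Finset.mem_univ u)
      have hnn2 : ∀ i ∈ (Finset.univ : Finset X2), (0:ℝ) ≤ q (u, a, i) := fun i _ => hq.1 (u, a, i)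
      exact (Finset.sum_eq_zero_iff_of_nonneg hnn2).mp h1 x2 (Finset.mem_univ x2)
    refine Finset.sum_eq_zero fun ω _ => ?_
    split_ifs with hx
    · have : q (ω.1, ω.2.1, ω.2.2.1) = 0 := by rw [hx]; exact hzero _ _
      simp [auxJoint, this]
    · rfl
  · rw [if_neg hpa]
    set c : ℝ := ∑ u : Fin k, ∑ x2 : X2, q (u, a, x2) with hcdef
    unfold mi
    rw [Finset.mul_sum]
    refine (Finset.sum_congr rfl fun ω _ => ?_).symm
    by_cases hx : ω.2.1 = a
    · rw [if_pos hx]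
      have hQa : auxJoint W (fun ω : Fin k × X1 × X2 => if ω.2.1 = a then q ω / c else 0) ω
          = auxJoint W q ω / c := by
        simp [auxJoint, hx, div_mul_eq_mul_div]
      rw [hQa]
      have e1 : pr (auxJoint W (fun ω : Fin k × X1 × X2 => if ω.2.1 = a then q ω / c else 0))
          (fun ω' => (ω'.1, g ω')) (ω.1, g ω)
          = pr (auxJoint W q) (fun ω' => (ω'.1, g ω', ω'.2.1)) (ω.1, g ω, ω.2.1) / c := by
        rw [pr_cond W q a c (fun ω' => (ω'.1, g ω')) (ω.1, g ω), pr_assoc, hx]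
      have e2 : pr (auxJoint W (fun ω : Fin k × X1 × X2 => if ω.2.1 = a then q ω / c else 0))
          (fun ω' => ω'.1) ω.1
          = pr (auxJoint W q) (fun ω' => (ω'.1, ω'.2.1)) (ω.1, ω.2.1) / c := by
        rw [pr_cond W q a c (fun ω' => ω'.1) ω.1, hx]
      have e3 : pr (auxJoint W (fun ω : Fin k × X1 × X2 => if ω.2.1 = a then q ω / c else 0))
          g (g ω)
          = pr (auxJoint W q) (fun ω' => (g ω', ω'.2.1)) (g ω, ω.2.1) / c := by
        rw [pr_cond W q a c g (g ω), hx]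
      have e4 : pr (auxJoint W q) (fun ω' => ω'.2.1) ω.2.1 = c := by
        rw [hx]; exact pr_x1 W hW q a
      rw [e1, e2, e3, e4, div_helper _ _ _ _ hpa]
      rw [← mul_assoc, mul_div_cancel₀ _ hpa]
    · rw [if_neg hx]
      have hQa : auxJoint W (fun ω : Fin k × X1 × X2 => if ω.2.1 = a then q ω / c else 0) ω
          = 0 := by
        simp [auxJoint, hx]
      rw [hQa]
      ring

/-- **Less-noisy condition implies its conditioned version (Section IV, (15) ⟹ (14a)).**
If `I(U;Y₁) ≤ I(U;Y₂)` for every finite auxiliary set (w.l.o.g. `Fin k`) and pmf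
`q(u,x₁,x₂)` with `U — (X₁,X₂) — (Y₁,Y₂)` Markov through the channel, then
`I(U;Y₁∣X₁) ≤ I(U;Y₂∣X₁)` for every such auxiliary pmf. -/
theorem less_noisy_implies_conditioned_less_noisy
    {X1 X2 Y1 Y2 : Type*} [Fintype X1] [Fintype X2] [Fintype Y1] [Fintype Y2]
    (W : X1 → X2 → Y1 × Y2 → ℝ) (hW : IsChannel W)
    (hln : ∀ (k : ℕ) (q : Fin k × X1 × X2 → ℝ), IsPMF q →
      mi (auxJoint W q) (fun ω => ω.1) (fun ω => ω.2.2.2.1) ≤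
        mi (auxJoint W q) (fun ω => ω.1) (fun ω => ω.2.2.2.2)) :
    ∀ (k : ℕ) (q : Fin k × X1 × X2 → ℝ), IsPMF q →
      cmi (auxJoint W q) (fun ω => ω.1) (fun ω => ω.2.2.2.1) (fun ω => ω.2.1) ≤
        cmi (auxJoint W q) (fun ω => ω.1) (fun ω => ω.2.2.2.2) (fun ω => ω.2.1) := by
  intro k q hq
  classical
  rw [cond_decomp W hW q hq (fun ω => ω.2.2.2.1), cond_decomp W hW q hq (fun ω => ω.2.2.2.2)]
  refine Finset.sum_le_sum fun a _ => ?_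
  by_cases hpa : (∑ u : Fin k, ∑ x2 : X2, q (u, a, x2)) = 0
  · simp [hpa]
  · rw [if_neg hpa, if_neg hpa]
    have hc0 : 0 ≤ ∑ u : Fin k, ∑ x2 : X2, q (u, a, x2) :=
      Finset.sum_nonneg fun u _ => Finset.sum_nonneg fun x2 _ => hq.1 _
    refine mul_le_mul_of_nonneg_left ?_ hc0
    refine hln k _ ⟨?_, ?_⟩
    · intro ω
      dsimp only
      split_ifs
      · exact div_nonneg (hq.1 _) hc0
      · exact le_refl 0
    · have h1 : ∀ u : Fin k, (∑ x1 : X1, ∑ x2 : X2,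
          if x1 = a then q (u, x1, x2) / (∑ u : Fin k, ∑ x2 : X2, q (u, a, x2)) else 0)
          = ∑ x2 : X2, q (u, a, x2) / (∑ u : Fin k, ∑ x2 : X2, q (u, a, x2)) := by
        intro u
        rw [Finset.sum_eq_single a]
        · simp
        · intro x1 _ hx1; simp [hx1]
        · simp
      dsimp only
      simp only [Fintype.sum_prod_type]
      rw [Finset.sum_congr rfl fun u _ => h1 u]
      simp only [← Finset.sum_div]
      exact div_self hpa

end CIC
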